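/- Fix an integer q ≥ 1 and set a = 4 − (q+1)·2^q and b = q·2^{q+1} − 4. Define K̃ : ℝ → ℝ by K̃(t) = 1 − |t|^q + a|t|^{q+1} + b|t|^{q+2} for |t| ≤ 1/2, K̃(t) = (1−|t|)^q − a(1−|t|)^{q+1} − b(1−|t|)^{q+2} for 1/2 < |t| ≤ 1, and K̃(t) = 0 for |t| > 1. Then: K̃ is continuous on ℝ; K̃(0) = 1; K̃(−t) = K̃(t) for all t; K̃(t) = 0 for |t| ≥ 1; lim_{t ↓ 0} (K̃(t) − 1)/t^q = −1; and lim_{t ↓ 0} (K̃(1) − K̃(1−t))/t^q = −1. -/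
import Mathlib


open Filter Topology

/-- The modified `q`-th order polynomial kernel with `a = 4 - (q+1)·2^q` and
`b = q·2^{q+1} - 4`. -/
noncomputable def Ktilde (q : ℕ) : ℝ → ℝ := fun t =>
  if |t| ≤ 1 / 2 then
    1 - |t| ^ q + (4 - ((q : ℝ) + 1) * 2 ^ q) * |t| ^ (q + 1)
      + ((q : ℝ) * 2 ^ (q + 1) - 4) * |t| ^ (q + 2)
  else if |t| ≤ 1 then
    (1 - |t|) ^ q - (4 - ((q : ℝ) + 1) * 2 ^ q) * (1 - |t|) ^ (q + 1)
      - ((q : ℝ) * 2 ^ (q + 1) - 4) * (1 - |t|) ^ (q + 2)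
  else 0

lemma key_match (q : ℕ) :
    1 - (1/2 : ℝ) ^ q + (4 - ((q : ℝ) + 1) * 2 ^ q) * (1/2 : ℝ) ^ (q + 1)
      + ((q : ℝ) * 2 ^ (q + 1) - 4) * (1/2 : ℝ) ^ (q + 2)
    = (1 - 1/2 : ℝ) ^ q - (4 - ((q : ℝ) + 1) * 2 ^ q) * (1 - 1/2 : ℝ) ^ (q + 1)
      - ((q : ℝ) * 2 ^ (q + 1) - 4) * (1 - 1/2 : ℝ) ^ (q + 2) := by
  have hc : (1/2 : ℝ) ^ q * 2 ^ q = 1 := by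
    rw [← mul_pow]; norm_num
  rw [show (1 : ℝ) - 1/2 = 1/2 by norm_num]
  simp only [pow_succ]
  linear_combination (-1 : ℝ) * hc

lemma poly_tendsto (A B : ℝ) :
    Tendsto (fun t : ℝ => -1 + A * t + B * t ^ 2)
      (nhdsWithin 0 (Set.Ioi 0)) (nhds (-1)) := by
  have h : Continuous (fun t : ℝ => -1 + A * t + B * t ^ 2) := by continuity
  have h2 : Tendsto (fun t : ℝ => -1 + A * t + B * t ^ 2)
      (nhdsWithin 0 (Set.Ioi 0)) (nhds (-1 + A * 0 + B * 0 ^ 2)) :=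
    (h.tendsto 0).mono_left nhdsWithin_le_nhds
  simpa using h2

/-- the modified `q`-th order polynomial kernel `K̃` is continuous,
`K̃(0) = 1`, `K̃(-t) = K̃(t)`, `K̃(t) = 0` for `|t| ≥ 1`,
`(K̃(t) - 1)/t^q → -1` as `t ↓ 0`, and `(K̃(1) - K̃(1-t))/t^q → -1` as `t ↓ 0`. -/
theorem stmt13 (q : ℕ) (hq : 1 ≤ q) :
    Continuous (Ktilde q) ∧
    Ktilde q 0 = 1 ∧
    (∀ t : ℝ, Ktilde q (-t) = Ktilde q t) ∧
    (∀ t : ℝ, 1 ≤ |t| → Ktilde q t = 0) ∧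
    Tendsto (fun t : ℝ => (Ktilde q t - 1) / t ^ q)
      (nhdsWithin 0 (Set.Ioi 0)) (nhds (-1)) ∧
    Tendsto (fun t : ℝ => (Ktilde q 1 - Ktilde q (1 - t)) / t ^ q)
      (nhdsWithin 0 (Set.Ioi 0)) (nhds (-1)) := by
  have hq0 : q ≠ 0 := Nat.one_le_iff_ne_zero.mp hq
  have hzero : ∀ t : ℝ, 1 ≤ |t| → Ktilde q t = 0 := by
    intro t ht
    unfold Ktilde
    rw [if_neg (by linarith), ]
    split_ifs with h
    · have h1 : |t| = 1 := le_antisymm h ht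
      rw [h1]
      simp [zero_pow, hq0]
    · rfl
  have hcont : Continuous (Ktilde q) := by
    unfold Ktilde
    apply Continuous.if_le
    · continuity
    · apply Continuous.if_le
      · continuity
      · continuity
      · exact continuous_abs
      · exact continuous_const
      · intro x hx
        rw [hx]
        simp [zero_pow, hq0]
    · exact continuous_abs
    · exact continuous_const
    · intro x hx
      rw [hx, if_pos (by norm_num : (1/2 : ℝ) ≤ 1)]
      exact key_match q
  refine ⟨hcont, ?_, ?_, hzero, ?_, ?_⟩
  · unfold Ktilde
    norm_num [zero_pow, hq0]
  · intro t
    unfold Ktilde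
    rw [abs_neg]
  · -- near origin
    have heq : ∀ᶠ t in nhdsWithin (0:ℝ) (Set.Ioi 0),
        (Ktilde q t - 1) / t ^ q
          = -1 + (4 - ((q : ℝ) + 1) * 2 ^ q) * t + ((q : ℝ) * 2 ^ (q + 1) - 4) * t ^ 2 := by
      filter_upwards [Ioo_mem_nhdsGT_of_mem (by constructor <;> norm_num :
          (0:ℝ) ∈ Set.Ico (0:ℝ) (1/2))] with t ht
      have ht0 : t ≠ 0 := ne_of_gt ht.1
      have htq : t ^ q ≠ 0 := pow_ne_zero _ ht0
      unfold Ktilde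
      rw [show |t| = t from abs_of_pos ht.1, if_pos (le_of_lt ht.2)]
      field_simp
      ring
    exact Tendsto.congr' (Filter.EventuallyEq.symm heq) (poly_tendsto _ _)
  · -- near boundary
    have h1 : Ktilde q 1 = 0 := hzero 1 (by norm_num)
    have heq : ∀ᶠ t in nhdsWithin (0:ℝ) (Set.Ioi 0),
        (Ktilde q 1 - Ktilde q (1 - t)) / t ^ q
          = -1 + (4 - ((q : ℝ) + 1) * 2 ^ q) * t + ((q : ℝ) * 2 ^ (q + 1) - 4) * t ^ 2 := by
      filter_upwards [Ioo_mem_nhdsGT_of_mem (by constructor <;> norm_num :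
          (0:ℝ) ∈ Set.Ico (0:ℝ) (1/2))] with t ht
      have ht0 : t ≠ 0 := ne_of_gt ht.1
      have htq : t ^ q ≠ 0 := pow_ne_zero _ ht0
      have habs : |1 - t| = 1 - t := abs_of_pos (by linarith [ht.2])
      rw [h1]
      unfold Ktilde
      rw [habs, if_neg (by linarith [ht.2]), if_pos (by linarith [ht.1])]
      rw [show (1 : ℝ) - (1 - t) = t by ring]
      field_simp
      ring
    exact Tendsto.congr' (Filter.EventuallyEq.symm heq) (poly_tendsto _ _)
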